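/- The function N(t) = N₀ Γ(μ) t^(μ−1) E_{ν,μ}(−c^ν t^ν) solves the fractional integral equation N(t) − N₀ t^(μ−1) = −c^ν · (₀D_t^(−ν) N)(t) for t > 0, where ₀D_t^(−ν) is the Riemann–Liouville fractional integral of order ν. -/

import Mathlib

open MeasureTheory Real Set intervalIntegral

lemma mygamma_ratio {ν : ℝ} (hν : 0 < ν) (M : ℝ) :
    ∃ B : ℝ, ∀ b : ℝ, B ≤ b → M * Real.Gamma b ≤ Real.Gamma (b + ν) := by
  have key : ∀ b : ℝ, 2 ≤ b → max M 1 * Real.Gamma b ≤ Real.Gamma (b + ν) →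
      M * Real.Gamma b ≤ Real.Gamma (b + ν) := by
    intro b hb h
    refine le_trans ?_ h
    have := Real.Gamma_pos_of_pos (show (0:ℝ) < b by linarith)
    nlinarith [le_max_left M 1]
  set M' := max M 1 with hM'
  have hM'1 : 1 ≤ M' := le_max_right M 1
  have hM'0 : 0 < M' := by linarith
  rcases le_or_gt 1 ν with hν1 | hν1
  · refine ⟨max 2 M', fun b hb => ?_⟩
    have hb2 : 2 ≤ b := le_trans (le_max_left _ _) hb
    have hbM : M' ≤ b := le_trans (le_max_right _ _) hb
    apply key b hb2
    have h1 : Real.Gamma (b + 1) ≤ Real.Gamma (b + ν) := by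
      rcases eq_or_lt_of_le hν1 with h | h
      · rw [← h]
      · exact le_of_lt (Real.Gamma_strictMonoOn_Ici (mem_Ici.mpr (by linarith))
          (mem_Ici.mpr (by linarith)) (by linarith))
    rw [Real.Gamma_add_one (by linarith : b ≠ 0)] at h1
    have hΓ := Real.Gamma_pos_of_pos (show (0:ℝ) < b by linarith)
    nlinarith
  · refine ⟨max (max 2 ν) ((2 * M') ^ (1/ν)), fun b hb => ?_⟩
    have hb2 : 2 ≤ b := le_trans ((le_max_left _ _).trans (le_max_left _ _)) hb
    have hbν : ν ≤ b := le_trans ((le_max_right _ _).trans (le_max_left _ _)) hb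
    have hbM : (2 * M') ^ (1/ν) ≤ b := le_trans (le_max_right _ _) hb
    have hb0 : (0:ℝ) < b := by linarith
    apply key b hb2
    have hbν0 : (0:ℝ) < b + ν := by linarith
    have hΓb := Real.Gamma_pos_of_pos hb0
    have hΓbν := Real.Gamma_pos_of_pos hbν0
    have hconv := Real.convexOn_log_Gamma.2 (mem_Ioi.mpr hbν0)
      (mem_Ioi.mpr (show (0:ℝ) < b + ν + 1 by linarith)) hν.le
      (by linarith : (0:ℝ) ≤ 1 - ν) (by ring)
    simp only [smul_eq_mul, Function.comp_apply] at hconv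
    rw [show ν * (b + ν) + (1 - ν) * (b + ν + 1) = b + 1 by ring] at hconv
    rw [Real.Gamma_add_one hb0.ne', show b + ν + 1 = (b + ν) + 1 by ring,
      Real.Gamma_add_one hbν0.ne'] at hconv
    rw [Real.log_mul hb0.ne' hΓb.ne', Real.log_mul hbν0.ne' hΓbν.ne'] at hconv
    have h1 : (2 * b) ^ (ν - 1) ≤ (b + ν) ^ (ν - 1) :=
      Real.rpow_le_rpow_of_nonpos hbν0 (by linarith) (by linarith)
    have h2 : (2*b) ^ (ν - 1) = 2 ^ (ν - 1) * b ^ (ν - 1) :=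
      Real.mul_rpow (by norm_num) hb0.le
    have h3 : (2:ℝ) ^ (-1:ℝ) ≤ 2 ^ (ν - 1) :=
      Real.rpow_le_rpow_of_exponent_le (by norm_num) (by linarith)
    have h4 : (2:ℝ) ^ (-1:ℝ) = 1/2 := by rw [Real.rpow_neg_one]; norm_num
    have h5 : b * b ^ (ν - 1) = b ^ ν := by
      have h := (Real.rpow_add hb0 1 (ν-1)).symm
      rw [Real.rpow_one, show (1:ℝ) + (ν-1) = ν by ring] at h
      exact h
    have h6 : 2 * M' ≤ b ^ ν := by
      calc 2 * M' = ((2 * M') ^ (1/ν)) ^ ν := by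
            rw [← Real.rpow_mul (by linarith), one_div, inv_mul_cancel₀ hν.ne', Real.rpow_one]
        _ ≤ b ^ ν := Real.rpow_le_rpow (Real.rpow_nonneg (by linarith) _) hbM hν.le
    have hweak : M' ≤ b * (b + ν) ^ (ν - 1) := by
      have hb1 : 0 ≤ b ^ (ν - 1) := Real.rpow_nonneg hb0.le _
      have h2' : (0:ℝ) ≤ 2 ^ (ν-1:ℝ) := Real.rpow_nonneg (by norm_num) _
      calc M' = (1/2) * (2 * M') := by ring
        _ ≤ (1/2) * b ^ ν := by nlinarith
        _ = b * ((2:ℝ) ^ (-1:ℝ) * b ^ (ν - 1)) := by rw [h4, ← h5]; ring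
        _ ≤ b * ((2:ℝ) ^ (ν-1:ℝ) * b ^ (ν - 1)) := by nlinarith
        _ = b * (2*b) ^ (ν - 1) := by rw [h2]
        _ ≤ b * (b + ν) ^ (ν - 1) := by nlinarith
    have hM'le : Real.log M' ≤ Real.log b + (ν - 1) * Real.log (b + ν) := by
      calc Real.log M' ≤ Real.log (b * (b + ν) ^ (ν - 1)) := Real.log_le_log hM'0 hweak
        _ = Real.log b + (ν - 1) * Real.log (b + ν) := by
            rw [Real.log_mul hb0.ne' (by positivity), Real.log_rpow hbν0]
    have hlog : Real.log (M' * Real.Gamma b) ≤ Real.log (Real.Gamma (b + ν)) := by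
      rw [Real.log_mul hM'0.ne' hΓb.ne']
      nlinarith [hconv, hM'le]
    exact (Real.log_le_log_iff (by positivity) hΓbν).mp hlog


lemma mybeta_integrable {a b t : ℝ} (ha : 0 < a) (hb : 0 < b) (ht : 0 < t) :
    IntervalIntegrable (fun u : ℝ => u ^ (a - 1) * (t - u) ^ (b - 1)) volume 0 t := by
  have h1 : IntervalIntegrable (fun u : ℝ => u ^ (a - 1) * (t - u) ^ (b - 1)) volume 0 (t/2) := by
    apply IntervalIntegrable.mul_continuousOn
    · exact intervalIntegrable_rpow' (by linarith)
    · apply ContinuousOn.rpow_const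
      · exact (continuous_const.sub continuous_id).continuousOn
      · intro x hx
        rw [uIcc_of_le (by linarith : (0:ℝ) ≤ t/2)] at hx
        left
        intro h
        nlinarith [hx.1, hx.2]
  have h2 : IntervalIntegrable (fun u : ℝ => u ^ (a - 1) * (t - u) ^ (b - 1)) volume (t/2) t := by
    apply IntervalIntegrable.continuousOn_mul (f := fun u : ℝ => (t - u) ^ (b - 1))
    · have hf : IntervalIntegrable (fun x : ℝ => x ^ (b - 1)) volume 0 (t/2) :=
        intervalIntegrable_rpow' (by linarith)
      have h3 := (hf.comp_sub_left t).symm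
      have e1 : t - t/2 = t/2 := by ring
      have e2 : t - 0 = t := by ring
      rwa [e1, e2] at h3
    · apply ContinuousOn.rpow_const continuous_id.continuousOn
      intro x hx
      rw [uIcc_of_le (by linarith : t/2 ≤ t)] at hx
      left
      simp only [id_eq]
      intro h
      nlinarith [hx.1]
  exact h1.trans h2

lemma mybeta_eval {a b t : ℝ} (ha : 0 < a) (hb : 0 < b) (ht : 0 < t) :
    ∫ u in (0:ℝ)..t, u ^ (a - 1) * (t - u) ^ (b - 1) =
      Real.Gamma a * Real.Gamma b / Real.Gamma (a + b) * t ^ (a + b - 1) := by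
  have hGr : Real.Gamma (a + b) ≠ 0 := (Real.Gamma_pos_of_pos (by linarith)).ne'
  have hG' : ((Real.Gamma (a + b) : ℝ) : ℂ) ≠ 0 := by exact_mod_cast hGr
  have hbeta : Complex.betaIntegral a b =
      ((Real.Gamma a * Real.Gamma b / Real.Gamma (a + b) : ℝ) : ℂ) := by
    have h := Complex.Gamma_mul_Gamma_eq_betaIntegral (s := (a:ℂ)) (t := (b:ℂ))
      (by simpa using ha) (by simpa using hb)
    rw [show ((a:ℂ) + b) = ((a + b : ℝ) : ℂ) by push_cast; ring] at h
    rw [Complex.Gamma_ofReal, Complex.Gamma_ofReal, Complex.Gamma_ofReal] at h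
    rw [Complex.ofReal_div, Complex.ofReal_mul, eq_div_iff hG']
    linear_combination -h
  have hscaled := Complex.betaIntegral_scaled (a:ℂ) (b:ℂ) ht
  have hLHS : (∫ x : ℝ in (0:ℝ)..t, (x : ℂ) ^ ((a:ℂ) - 1) * ((t : ℂ) - x) ^ ((b:ℂ) - 1)) =
      ((∫ u in (0:ℝ)..t, u ^ (a - 1) * (t - u) ^ (b - 1) : ℝ) : ℂ) := by
    rw [← intervalIntegral.integral_ofReal]
    apply intervalIntegral.integral_congr
    intro x hx
    rw [uIcc_of_le ht.le] at hx
    dsimp only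
    rw [Complex.ofReal_mul, Complex.ofReal_cpow hx.1,
      Complex.ofReal_cpow (sub_nonneg.2 hx.2)]
    push_cast; ring
  have hRHS : (t : ℂ) ^ ((a:ℂ) + b - 1) = ((t ^ (a + b - 1) : ℝ) : ℂ) := by
    rw [Complex.ofReal_cpow ht.le]
    push_cast; ring_nf
  rw [hLHS, hRHS, hbeta, ← Complex.ofReal_mul] at hscaled
  rw [Complex.ofReal_inj.mp hscaled, mul_comm]



open Filter in
lemma myml_summable {ν m : ℝ} (hν : 0 < ν) (hm : 0 < m) (x : ℝ) :
    Summable (fun k : ℕ => x ^ k / Real.Gamma (m + k * ν)) := by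
  obtain ⟨B, hB⟩ := mygamma_ratio hν (2 * (|x| + 1))
  apply summable_of_ratio_norm_eventually_le (r := 1/2) (by norm_num)
  filter_upwards [eventually_ge_atTop ⌈(B - m) / ν⌉₊] with k hk
  have hbk : 0 < m + k * ν := by positivity
  have hbk1 : 0 < m + (k+1 : ℕ) * ν := by positivity
  have hkB : B ≤ m + k * ν := by
    have h1 : (B - m) / ν ≤ (⌈(B - m) / ν⌉₊ : ℝ) := Nat.le_ceil _
    have h2 : ((⌈(B - m) / ν⌉₊ : ℕ) : ℝ) ≤ (k : ℝ) := Nat.cast_le.mpr hk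
    have := (div_le_iff₀ hν).mp (h1.trans h2)
    linarith
  have hΓ := Real.Gamma_pos_of_pos hbk
  have hΓ1 := Real.Gamma_pos_of_pos hbk1
  have hrat := hB _ hkB
  have harg : m + (k+1 : ℕ) * ν = (m + k * ν) + ν := by push_cast; ring
  rw [harg] at hΓ1 ⊢
  rw [Real.norm_eq_abs, Real.norm_eq_abs, abs_div, abs_div,
    abs_of_pos hΓ, abs_of_pos hΓ1, abs_pow, abs_pow]
  have hxpow : (0:ℝ) ≤ |x| ^ k := pow_nonneg (abs_nonneg x) k
  calc |x| ^ (k+1) / Real.Gamma ((m + k * ν) + ν)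
      ≤ |x| ^ (k+1) / (2 * (|x| + 1) * Real.Gamma (m + k * ν)) := by
        gcongr
    _ ≤ 1/2 * (|x| ^ k / Real.Gamma (m + k * ν)) := by
        rw [pow_succ, div_le_iff₀ (by positivity), mul_comm]
        have : 1/2 * (|x| ^ k / Real.Gamma (m + k * ν)) * (2 * (|x| + 1) * Real.Gamma (m + k * ν))
            = |x| ^ k * (|x| + 1) := by field_simp
        rw [this]
        nlinarith [abs_nonneg x]


theorem mittagLeffler_solves_fractional_integral_equation
    (μ ν c N₀ : ℝ) (hμ : 0 < μ) (hν : 0 < ν) (hc : 0 < c)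
    (N : ℝ → ℝ)
    (hN : ∀ t : ℝ, 0 < t →
      N t = N₀ * Real.Gamma μ * t ^ (μ - 1) *
        ∑' k : ℕ, (-(c ^ ν * t ^ ν)) ^ k / Real.Gamma (μ + k * ν)) :
    ∀ t : ℝ, 0 < t →
      N t - N₀ * t ^ (μ - 1)
        = -c ^ ν * ((1 / Real.Gamma ν) * ∫ u in (0 : ℝ)..t, (t - u) ^ (ν - 1) * N u) := by
  intro t ht
  have hcν : 0 < c ^ ν := Real.rpow_pos_of_pos hc ν
  have htν : 0 < t ^ ν := Real.rpow_pos_of_pos ht ν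
  have hΓν := Real.Gamma_pos_of_pos hν
  have hΓμ := Real.Gamma_pos_of_pos hμ
  have hak : ∀ k : ℕ, 0 < μ + (k : ℝ) * ν := fun k =>
    add_pos_of_pos_of_nonneg hμ (mul_nonneg (Nat.cast_nonneg k) hν.le)
  have hΓa : ∀ k : ℕ, 0 < Real.Gamma (μ + k * ν) := fun k => Real.Gamma_pos_of_pos (hak k)
  have hΓaν : ∀ k : ℕ, 0 < Real.Gamma (μ + k * ν + ν) := fun k =>
    Real.Gamma_pos_of_pos (by linarith [hak k])
  set F : ℕ → ℝ → ℝ := fun k u =>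
    N₀ * Real.Gamma μ * (-c ^ ν) ^ k / Real.Gamma (μ + k * ν) *
      (u ^ (μ + (k : ℝ) * ν - 1) * (t - u) ^ (ν - 1)) with hF
  -- pointwise series representation of the integrand
  have hNu : ∀ u : ℝ, u ∈ Ioc (0:ℝ) t → (t - u) ^ (ν - 1) * N u = ∑' k : ℕ, F k u := by
    intro u hu
    have hu0 : 0 < u := hu.1
    have hterm : ∀ k : ℕ, F k u =
        (t - u) ^ (ν - 1) * (N₀ * Real.Gamma μ * u ^ (μ - 1)) *
          ((-(c ^ ν * u ^ ν)) ^ k / Real.Gamma (μ + k * ν)) := by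
      intro k
      have h1 : (-(c ^ ν * u ^ ν)) ^ k = (-c ^ ν) ^ k * u ^ ((k : ℝ) * ν) := by
        rw [show -(c ^ ν * u ^ ν) = (-c ^ ν) * u ^ ν by ring, mul_pow,
          ← Real.rpow_natCast (u ^ ν) k, ← Real.rpow_mul hu0.le, mul_comm ν]
      have h2 : u ^ (μ + (k : ℝ) * ν - 1) = u ^ (μ - 1) * u ^ ((k : ℝ) * ν) := by
        rw [← Real.rpow_add hu0]; ring_nf
      rw [hF]
      simp only
      rw [h1, h2]
      ring
    rw [hN u hu0, tsum_congr hterm, tsum_mul_left]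
    ring
  -- integrability of each term
  have hInt : ∀ k : ℕ, IntegrableOn (F k) (Ioc (0:ℝ) t) volume := by
    intro k
    have h := (mybeta_integrable (hak k) hν ht).const_mul
      (N₀ * Real.Gamma μ * (-c ^ ν) ^ k / Real.Gamma (μ + k * ν))
    rw [intervalIntegrable_iff_integrableOn_Ioc_of_le ht.le] at h
    exact h
  -- values of the integrals
  have hval : ∀ k : ℕ, ∫ u in Ioc (0:ℝ) t, F k u =
      N₀ * Real.Gamma μ * (-c ^ ν) ^ k / Real.Gamma (μ + k * ν) *
        (Real.Gamma (μ + k * ν) * Real.Gamma ν / Real.Gamma (μ + k * ν + ν) *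
          t ^ (μ + k * ν + ν - 1)) := by
    intro k
    rw [← intervalIntegral.integral_of_le ht.le, hF]
    simp only
    rw [intervalIntegral.integral_const_mul, mybeta_eval (hak k) hν ht]
  -- values of the norm integrals
  have hnorm : ∀ k : ℕ, ∫ u in Ioc (0:ℝ) t, ‖F k u‖ =
      |N₀ * Real.Gamma μ| * (c ^ ν) ^ k / Real.Gamma (μ + k * ν) *
        (Real.Gamma (μ + k * ν) * Real.Gamma ν / Real.Gamma (μ + k * ν + ν) *
          t ^ (μ + k * ν + ν - 1)) := by
    intro k
    have habs : ∀ u ∈ Ioc (0:ℝ) t, ‖F k u‖ =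
        |N₀ * Real.Gamma μ| * (c ^ ν) ^ k / Real.Gamma (μ + k * ν) *
          (u ^ (μ + (k : ℝ) * ν - 1) * (t - u) ^ (ν - 1)) := by
      intro u hu
      rw [hF]
      simp only [Real.norm_eq_abs]
      rw [abs_mul, abs_div, abs_mul, abs_pow, abs_neg, abs_of_pos hcν,
        abs_of_pos (hΓa k),
        abs_of_nonneg (mul_nonneg (Real.rpow_nonneg hu.1.le _)
          (Real.rpow_nonneg (sub_nonneg.mpr hu.2) _))]
    rw [setIntegral_congr_fun measurableSet_Ioc habs,
      ← intervalIntegral.integral_of_le ht.le,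
      intervalIntegral.integral_const_mul, mybeta_eval (hak k) hν ht]
  -- summability of the norm integrals
  have hS : Summable fun k : ℕ => ∫ u in Ioc (0:ℝ) t, ‖F k u‖ := by
    have hbase := (myml_summable hν (show (0:ℝ) < μ + ν by linarith)
      (c ^ ν * t ^ ν)).mul_left (|N₀ * Real.Gamma μ| * Real.Gamma ν * t ^ (μ + ν - 1))
    apply Summable.congr hbase
    intro k
    rw [hnorm k]
    have hT : t ^ (μ + (k:ℝ) * ν + ν - 1) = t ^ (μ + ν - 1) * (t ^ ν) ^ k := by
      rw [show μ + (k:ℝ) * ν + ν - 1 = (μ + ν - 1) + (k:ℝ) * ν by ring,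
        Real.rpow_add ht, ← Real.rpow_natCast (t ^ ν) k, ← Real.rpow_mul ht.le, mul_comm ν]
    have hG : Real.Gamma (μ + ν + (k:ℝ) * ν) = Real.Gamma (μ + (k:ℝ) * ν + ν) := by
      ring_nf
    rw [hT, hG, mul_pow]
    field_simp
  -- exchange integral and sum
  have hswap : ∫ u in Ioc (0:ℝ) t, (t - u) ^ (ν - 1) * N u = ∑' k : ℕ, ∫ u in Ioc (0:ℝ) t, F k u := by
    rw [setIntegral_congr_fun measurableSet_Ioc hNu]
    exact (integral_tsum_of_summable_integral_norm hInt hS).symm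
  -- summability of the main series (shifted)
  have hsum1 : Summable fun k : ℕ => (-(c ^ ν * t ^ ν)) ^ k / Real.Gamma (μ + k * ν) :=
    myml_summable hν hμ _
  -- assemble
  rw [hN t ht, intervalIntegral.integral_of_le ht.le, hswap, tsum_congr hval]
  have hL : N₀ * Real.Gamma μ * t ^ (μ - 1) *
        (∑' k : ℕ, (-(c ^ ν * t ^ ν)) ^ k / Real.Gamma (μ + k * ν)) - N₀ * t ^ (μ - 1)
      = ∑' k : ℕ, N₀ * Real.Gamma μ * t ^ (μ - 1) *
          ((-(c ^ ν * t ^ ν)) ^ (k + 1) / Real.Gamma (μ + ↑(k + 1) * ν)) := by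
    rw [Summable.tsum_eq_zero_add hsum1]
    rw [show ((-(c ^ ν * t ^ ν)) ^ (0:ℕ) / Real.Gamma (μ + (0:ℕ) * ν)) = 1 / Real.Gamma μ by
      norm_num]
    rw [mul_add, ← tsum_mul_left]
    have : N₀ * Real.Gamma μ * t ^ (μ - 1) * (1 / Real.Gamma μ) = N₀ * t ^ (μ - 1) := by
      field_simp
    rw [this]
    ring
  rw [hL, ← tsum_mul_left, ← tsum_mul_left]
  have hfin : ∀ k : ℕ,
      N₀ * Real.Gamma μ * t ^ (μ - 1) * ((-(c ^ ν * t ^ ν)) ^ (k + 1) / Real.Gamma (μ + ↑(k + 1) * ν))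
        = -c ^ ν * (1 / Real.Gamma ν *
            (N₀ * Real.Gamma μ * (-c ^ ν) ^ k / Real.Gamma (μ + k * ν) *
              (Real.Gamma (μ + k * ν) * Real.Gamma ν / Real.Gamma (μ + k * ν + ν) *
                t ^ (μ + k * ν + ν - 1)))) := by
    intro k
    have hGarg : Real.Gamma (μ + ((k:ℕ) + 1 : ℕ) * ν) = Real.Gamma (μ + (k:ℝ) * ν + ν) := by
      push_cast
      ring_nf
    have hC : (-(c ^ ν * t ^ ν)) ^ (k + 1) = ((-c ^ ν) ^ k * (-c ^ ν)) * ((t ^ ν) ^ k * t ^ ν) := by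
      rw [show -(c ^ ν * t ^ ν) = (-c ^ ν) * t ^ ν by ring, mul_pow, pow_succ, pow_succ]
    have hT : t ^ (μ + (k:ℝ) * ν + ν - 1) = t ^ (μ - 1) * ((t ^ ν) ^ k * t ^ ν) := by
      rw [show μ + (k:ℝ) * ν + ν - 1 = (μ - 1) + ((k:ℝ) * ν + ν) by ring,
        Real.rpow_add ht, Real.rpow_add ht, ← Real.rpow_natCast (t ^ ν) k,
        ← Real.rpow_mul ht.le, mul_comm ν]
    rw [hGarg, hC, hT]
    field_simp
  exact tsum_congr hfin
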